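/- arXiv:2501.16248 — 6 statements merged into one kernel-verified Lean document; each statement's English description precedes it below -/
import Mathlib

section
/- Let A ∈ ℝ^{n×n} be symmetric positive definite, let S ∈ ℝ^{n×n_s} and R ∈ ℝ^{n_c×n} satisfy RS = 0, SᵀS = I_s, RRᵀ = I_c and n_s + n_c = n, and set P⋆ = (I − S(SᵀAS)⁻¹SᵀA)Rᵀ. Then I − P⋆R is the A-orthogonal projection onto the range of S: (I − P⋆R)² = I − P⋆R, the range of I − P⋆R equals the column space of S, and A(I − P⋆R) = (I − P⋆R)ᵀA (A-self-adjointness). Consequently the range of P⋆ is the A-orthogonal complement of the range of S. -/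
open Matrix

/-- With GAMG orthogonality conditions and `P⋆` the ideal interpolation,
`I − P⋆R` is the `A`-orthogonal projection onto the range of `S`: it is idempotent,
its range is the column space of `S`, and it is `A`-self-adjoint.  Consequently
the range of `P⋆` is the `A`-orthogonal complement of the range of `S`. -/
theorem ideal_interpolation_A_orthogonal_projection {n ns nc : ℕ}
    (A : Matrix (Fin n) (Fin n) ℝ) (hA : A.PosDef)
    (S : Matrix (Fin n) (Fin ns) ℝ) (R : Matrix (Fin nc) (Fin n) ℝ)
    (hRS : R * S = 0) (hS : Sᵀ * S = 1) (hR : R * Rᵀ = 1)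
    (hdim : ns + nc = n)
    (P : Matrix (Fin n) (Fin nc) ℝ)
    (hP : P = (1 - S * (Sᵀ * A * S)⁻¹ * Sᵀ * A) * Rᵀ) :
    (1 - P * R) * (1 - P * R) = 1 - P * R ∧
    Set.range (1 - P * R).mulVec = Set.range S.mulVec ∧
    A * (1 - P * R) = (1 - P * R)ᵀ * A ∧
    Set.range P.mulVec =
      {v : Fin n → ℝ | ∀ w ∈ Set.range S.mulVec, w ⬝ᵥ (A *ᵥ v) = 0} := by
  classical
  have hAt : Aᵀ = A := by
    have := hA.isHermitian.eq
    rwa [conjTranspose_eq_transpose_of_trivial] at this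
  set M : Matrix (Fin ns) (Fin ns) ℝ := Sᵀ * A * S with hMdef
  -- M is positive definite, hence invertible
  have hM : M.PosDef := by
    refine PosDef.of_dotProduct_mulVec_pos ?_ ?_
    · show Mᴴ = M
      rw [conjTranspose_eq_transpose_of_trivial]
      simp [hMdef, Matrix.transpose_mul, hAt, Matrix.mul_assoc]
    · intro x hx
      have hSx : S *ᵥ x ≠ 0 := by
        intro h
        apply hx
        have h2 := congrArg (fun v => Sᵀ *ᵥ v) h
        simpa [Matrix.mulVec_mulVec, hS] using h2
      have hpos := hA.dotProduct_mulVec_pos hSx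
      have hd : ∀ z : Fin n → ℝ, (S *ᵥ x) ⬝ᵥ z = x ⬝ᵥ (Sᵀ *ᵥ z) := by
        intro z
        calc (S *ᵥ x) ⬝ᵥ z = z ⬝ᵥ (S *ᵥ x) := dotProduct_comm _ _
          _ = (z ᵥ* S) ⬝ᵥ x := dotProduct_mulVec _ _ _
          _ = (Sᵀ *ᵥ z) ⬝ᵥ x := by rw [mulVec_transpose]
          _ = x ⬝ᵥ (Sᵀ *ᵥ z) := dotProduct_comm _ _
      have : (0 : ℝ) < x ⬝ᵥ (Sᵀ *ᵥ (A *ᵥ (S *ᵥ x))) := by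
        rw [← hd]
        simpa using hpos
      simpa [Matrix.mulVec_mulVec, hMdef, Matrix.mul_assoc] using this
  have hMd : IsUnit M.det := hM.det_pos.ne'.isUnit
  have hMinv : M⁻¹ * M = 1 := nonsing_inv_mul M hMd
  have hinvM : M * M⁻¹ = 1 := mul_nonsing_inv M hMd
  have hMt : Mᵀ = M := by
    simp [hMdef, Matrix.transpose_mul, hAt, Matrix.mul_assoc]
  have hMit : (M⁻¹)ᵀ = M⁻¹ := by
    rw [Matrix.transpose_nonsing_inv, hMt]
  -- completeness: S Sᵀ + Rᵀ R = 1
  have hSRt : Sᵀ * Rᵀ = 0 := by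
    have h2 := congrArg transpose hRS
    simpa [transpose_mul] using h2
  have hUtU : (fromRows Sᵀ R) * (fromCols S Rᵀ) = 1 := by
    rw [fromRows_mul_fromCols, hS, hRS, hR, hSRt]
    exact fromBlocks_one
  have e : Fin n ≃ Fin ns ⊕ Fin nc := (finSumFinEquiv.trans (finCongr hdim)).symm
  have hUUt : (fromCols S Rᵀ) * (fromRows Sᵀ R) = 1 :=
    (fromCols_mul_fromRows_eq_one_comm e S Rᵀ Sᵀ R).2 hUtU
  have hSSRR : S * Sᵀ + Rᵀ * R = 1 := by
    rw [← fromCols_mul_fromRows]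
    exact hUUt
  have hRtR : Rᵀ * R = 1 - S * Sᵀ := eq_sub_of_add_eq' hSSRR
  -- abbreviation Q = S M⁻¹ Sᵀ A
  set Q : Matrix (Fin n) (Fin n) ℝ := S * (M⁻¹ * (Sᵀ * A)) with hQdef
  have hQS : Q * S = S := by
    calc Q * S = S * (M⁻¹ * (Sᵀ * (A * S))) := by
          simp [hQdef, Matrix.mul_assoc]
      _ = S * (M⁻¹ * M) := by rw [hMdef, Matrix.mul_assoc]
      _ = S := by rw [hMinv, Matrix.mul_one]
  have hPR : P * R = 1 - Q := by
    have h1 : P * R = (1 - Q) * (Rᵀ * R) := by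
      rw [hP, Matrix.mul_assoc]
      congr 2
      simp [hQdef, Matrix.mul_assoc]
    rw [h1, hRtR]
    have h2 : Q * (S * Sᵀ) = S * Sᵀ := by
      rw [← Matrix.mul_assoc, hQS]
    rw [Matrix.mul_sub, Matrix.mul_one, Matrix.sub_mul, Matrix.one_mul, h2]
    abel
  have hT : 1 - P * R = Q := by rw [hPR]; abel
  refine ⟨?_, ?_, ?_, ?_⟩
  · -- idempotent
    rw [hT]
    calc Q * Q = (Q * S) * (M⁻¹ * (Sᵀ * A)) := by
          rw [hQdef, ← Matrix.mul_assoc]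
      _ = Q := by rw [hQS, hQdef]
  · -- range = range S
    rw [hT]
    apply le_antisymm
    · rintro _ ⟨v, rfl⟩
      exact ⟨(M⁻¹ * (Sᵀ * A)) *ᵥ v, by rw [Matrix.mulVec_mulVec, ← hQdef]⟩
    · rintro _ ⟨y, rfl⟩
      exact ⟨S *ᵥ y, by rw [Matrix.mulVec_mulVec, hQS]⟩
  · -- A-self-adjoint
    rw [hT, hQdef]
    simp only [Matrix.transpose_mul, hMit, hAt, transpose_transpose]
    simp [Matrix.mul_assoc]
  · -- range P = A-orthogonal complement of range S
    have hdot : ∀ (y : Fin ns → ℝ) (z : Fin n → ℝ),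
        (S *ᵥ y) ⬝ᵥ z = y ⬝ᵥ (Sᵀ *ᵥ z) := by
      intro y z
      calc (S *ᵥ y) ⬝ᵥ z = z ⬝ᵥ (S *ᵥ y) := dotProduct_comm _ _
        _ = (z ᵥ* S) ⬝ᵥ y := dotProduct_mulVec _ _ _
        _ = (Sᵀ *ᵥ z) ⬝ᵥ y := by rw [mulVec_transpose]
        _ = y ⬝ᵥ (Sᵀ *ᵥ z) := dotProduct_comm _ _
    have hSAQ : (Sᵀ * A) * Q = Sᵀ * A := by
      calc (Sᵀ * A) * Q = ((Sᵀ * A) * S) * (M⁻¹ * (Sᵀ * A)) := by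
            rw [hQdef, ← Matrix.mul_assoc]
        _ = (M * M⁻¹) * (Sᵀ * A) := by simp only [hMdef, Matrix.mul_assoc]
        _ = Sᵀ * A := by rw [hinvM, Matrix.one_mul]
    have hSAP : (Sᵀ * A) * P = 0 := by
      have h1 : (Sᵀ * A) * (1 - Q) = 0 := by
        rw [Matrix.mul_sub, Matrix.mul_one, hSAQ, sub_self]
      have h2 : P = (1 - Q) * Rᵀ := by
        rw [hP]
        congr 1
        simp [hQdef, Matrix.mul_assoc]
      rw [h2, ← Matrix.mul_assoc, h1, Matrix.zero_mul]
    ext v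
    constructor
    · rintro ⟨x, rfl⟩ w ⟨y, rfl⟩
      rw [hdot, Matrix.mulVec_mulVec, Matrix.mulVec_mulVec, hSAP,
        Matrix.zero_mulVec, dotProduct_zero]
    · intro hv
      have hu : (Sᵀ * A) *ᵥ v = 0 := by
        have h0 := hv (S *ᵥ ((Sᵀ * A) *ᵥ v)) ⟨_, rfl⟩
        rw [hdot, Matrix.mulVec_mulVec] at h0
        exact dotProduct_self_eq_zero.mp h0
      refine ⟨R *ᵥ v, ?_⟩
      have hQv : Q *ᵥ v = 0 := by
        have : Q = (S * M⁻¹) * (Sᵀ * A) := by rw [hQdef, Matrix.mul_assoc]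
        rw [this, ← Matrix.mulVec_mulVec, hu, Matrix.mulVec_zero]
      rw [Matrix.mulVec_mulVec, hPR, Matrix.sub_mulVec, Matrix.one_mulVec, hQv, sub_zero]
end

section
/- Let A ∈ ℝ^{n×n} be symmetric positive definite, let S ∈ ℝ^{n×n_s} and R ∈ ℝ^{n_c×n} satisfy RS = 0, SᵀS = I_s, RRᵀ = I_c and n_s + n_c = n, and set P⋆ = (I − S(SᵀAS)⁻¹SᵀA)Rᵀ. Then the A-orthogonal projections onto range(P⋆) and range(S) sum to the identity: P⋆(P⋆ᵀAP⋆)⁻¹P⋆ᵀA + S(SᵀAS)⁻¹SᵀA = I. -/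
open Matrix

private lemma conj_posDef {n m : ℕ} {A : Matrix (Fin n) (Fin n) ℝ} (hA : A.PosDef)
    {B : Matrix (Fin n) (Fin m) ℝ} (hB : ∀ x : Fin m → ℝ, B *ᵥ x = 0 → x = 0) :
    (Bᵀ * A * B).PosDef := by
  have hAt : Aᵀ = A := hA.1
  refine posDef_iff_dotProduct_mulVec.mpr ⟨?_, ?_⟩
  · show (Bᵀ * A * B)ᴴ = Bᵀ * A * B
    simp only [conjTranspose_eq_transpose_of_trivial, transpose_mul, transpose_transpose,
      hAt, Matrix.mul_assoc]
  · intro x hx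
    have hBx : B *ᵥ x ≠ 0 := fun h => hx (hB x h)
    have hpos := hA.dotProduct_mulVec_pos hBx
    have key : star x ⬝ᵥ ((Bᵀ * A * B) *ᵥ x) = star (B *ᵥ x) ⬝ᵥ (A *ᵥ (B *ᵥ x)) := by
      simp only [star_trivial, ← mulVec_mulVec]
      rw [dotProduct_mulVec, vecMul_transpose]
    rw [key]
    exact hpos

set_option maxHeartbeats 1000000 in
/-- With GAMG orthogonality conditions and `P⋆` the ideal interpolation, the
`A`-orthogonal projections onto `range P⋆` and `range S` sum to the identity:
`P⋆(P⋆ᵀAP⋆)⁻¹P⋆ᵀA + S(SᵀAS)⁻¹SᵀA = I`. -/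
theorem ideal_interpolation_projections_sum_to_identity {n ns nc : ℕ}
    (A : Matrix (Fin n) (Fin n) ℝ) (hA : A.PosDef)
    (S : Matrix (Fin n) (Fin ns) ℝ) (R : Matrix (Fin nc) (Fin n) ℝ)
    (hRS : R * S = 0) (hS : Sᵀ * S = 1) (hR : R * Rᵀ = 1)
    (hdim : ns + nc = n)
    (P : Matrix (Fin n) (Fin nc) ℝ)
    (hP : P = (1 - S * (Sᵀ * A * S)⁻¹ * Sᵀ * A) * Rᵀ) :
    P * (Pᵀ * A * P)⁻¹ * Pᵀ * A + S * (Sᵀ * A * S)⁻¹ * Sᵀ * A = 1 := by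
  have hAt : Aᵀ = A := hA.1
  -- `S` has trivial kernel
  have hSinj : ∀ x : Fin ns → ℝ, S *ᵥ x = 0 → x = 0 := by
    intro x hx
    have h : (Sᵀ * S) *ᵥ x = Sᵀ *ᵥ (S *ᵥ x) := (mulVec_mulVec _ _ _).symm
    rw [hS, one_mulVec, hx, mulVec_zero] at h
    exact h
  have hSAS : (Sᵀ * A * S).PosDef := conj_posDef hA hSinj
  set B := (Sᵀ * A * S)⁻¹ with hBdef
  have hdS : IsUnit (Sᵀ * A * S).det := hSAS.det_pos.ne'.isUnit
  have hBt : Bᵀ = B := by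
    rw [hBdef, transpose_nonsing_inv]
    congr 1
    simp only [transpose_mul, transpose_transpose, hAt, Matrix.mul_assoc]
  have hB1' : Sᵀ * (A * (S * B)) = 1 := by
    have h := mul_nonsing_inv _ hdS
    rw [show (Sᵀ * A * S) * B = Sᵀ * (A * (S * B)) from by
      rw [Matrix.mul_assoc, Matrix.mul_assoc]] at h
    exact h
  have hB2' : B * (Sᵀ * (A * S)) = 1 := by
    have h := nonsing_inv_mul _ hdS
    rw [show B * (Sᵀ * A * S) = B * (Sᵀ * (A * S)) from by
      rw [Matrix.mul_assoc]] at h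
    exact h
  have hSR : Sᵀ * Rᵀ = 0 := by
    have h := congrArg transpose hRS
    simpa using h
  -- normalized form of `P`
  have hP' : P = Rᵀ - S * (B * (Sᵀ * (A * Rᵀ))) := by
    rw [hP, Matrix.sub_mul, Matrix.one_mul]
    simp only [Matrix.mul_assoc]
  have hPt : Pᵀ = R - R * (A * (S * (B * Sᵀ))) := by
    rw [hP']
    simp only [transpose_sub, transpose_mul, transpose_transpose, hAt, hBt, Matrix.mul_assoc]
  -- `PᵀAS = 0`
  have F1 : Pᵀ * (A * S) = 0 := by
    rw [hPt, Matrix.sub_mul]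
    have h : R * (A * (S * (B * Sᵀ))) * (A * S) = R * (A * S) := by
      simp only [Matrix.mul_assoc]
      rw [hB2', Matrix.mul_one]
    rw [h, sub_self]
  -- `SᵀAP = 0`
  have F2 : Sᵀ * (A * P) = 0 := by
    have h := congrArg transpose F1
    simpa only [transpose_zero, transpose_mul, transpose_transpose, hAt,
      Matrix.mul_assoc] using h
  -- `R * P = 1`, so `P` has trivial kernel
  have F3 : R * P = 1 := by
    rw [hP', Matrix.mul_sub, hR, ← Matrix.mul_assoc, hRS, Matrix.zero_mul, sub_zero]
  have hPinj : ∀ x : Fin nc → ℝ, P *ᵥ x = 0 → x = 0 := by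
    intro x hx
    have h : (R * P) *ᵥ x = R *ᵥ (P *ᵥ x) := (mulVec_mulVec _ _ _).symm
    rw [F3, one_mulVec, hx, mulVec_zero] at h
    exact h
  have hPAP : (Pᵀ * A * P).PosDef := conj_posDef hA hPinj
  set C := (Pᵀ * A * P)⁻¹ with hCdef
  have hdP : IsUnit (Pᵀ * A * P).det := hPAP.det_pos.ne'.isUnit
  have hC2 : C * (Pᵀ * (A * P)) = 1 := by
    have h := nonsing_inv_mul _ hdP
    rw [show C * (Pᵀ * A * P) = C * (Pᵀ * (A * P)) from by
      rw [Matrix.mul_assoc]] at h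
    exact h
  -- abbreviation for the claimed sum of projections
  set Q := P * C * Pᵀ * A + S * B * Sᵀ * A with hQdef
  have hQS : Q * S = S := by
    rw [hQdef, Matrix.add_mul]
    have h1 : P * C * Pᵀ * A * S = 0 := by
      simp only [Matrix.mul_assoc]
      rw [F1, Matrix.mul_zero, Matrix.mul_zero]
    have h2 : S * B * Sᵀ * A * S = S := by
      simp only [Matrix.mul_assoc]
      rw [hB2', Matrix.mul_one]
    rw [h1, h2, zero_add]
  have hQP : Q * P = P := by
    rw [hQdef, Matrix.add_mul]
    have h1 : P * C * Pᵀ * A * P = P := by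
      simp only [Matrix.mul_assoc]
      rw [hC2, Matrix.mul_one]
    have h2 : S * B * Sᵀ * A * P = 0 := by
      simp only [Matrix.mul_assoc]
      rw [F2, Matrix.mul_zero, Matrix.mul_zero]
    rw [h1, h2, add_zero]
  have hRt : Rᵀ = P + S * (B * (Sᵀ * (A * Rᵀ))) := by
    rw [hP']; abel
  have hQR : Q * Rᵀ = Rᵀ := by
    conv_lhs => rw [hRt]
    rw [Matrix.mul_add, hQP]
    have h : Q * (S * (B * (Sᵀ * (A * Rᵀ)))) = S * (B * (Sᵀ * (A * Rᵀ))) := by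
      rw [← Matrix.mul_assoc, hQS]
    rw [h, ← hRt]
  -- completeness: `SSᵀ + RᵀR = 1`
  have e : Fin n ≃ Fin ns ⊕ Fin nc := (finCongr hdim.symm).trans finSumFinEquiv.symm
  have h1 : fromRows Sᵀ R * fromCols S Rᵀ = 1 := by
    rw [fromRows_mul_fromCols, hS, hSR, hRS, hR, fromBlocks_one]
  have h2 : fromCols S Rᵀ * fromRows Sᵀ R = 1 :=
    (fromCols_mul_fromRows_eq_one_comm e S Rᵀ Sᵀ R).mpr h1
  rw [fromCols_mul_fromRows] at h2
  -- conclude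
  have : Q = 1 := by
    calc Q = Q * 1 := (Matrix.mul_one Q).symm
      _ = Q * (S * Sᵀ + Rᵀ * R) := by rw [h2]
      _ = Q * S * Sᵀ + Q * Rᵀ * R := by
          rw [Matrix.mul_add, Matrix.mul_assoc, Matrix.mul_assoc]
      _ = S * Sᵀ + Rᵀ * R := by rw [hQS, hQR]
      _ = 1 := h2
  exact this
end

section
/- Let A ∈ ℝ^{n×n} be symmetric positive definite, let S ∈ ℝ^{n×n_s} and R ∈ ℝ^{n_c×n} satisfy RS = 0, SᵀS = I_s, RRᵀ = I_c and n_s + n_c = n, and set P⋆ = (I − S(SᵀAS)⁻¹SᵀA)Rᵀ. Then the two-grid method consisting of exact coarse-grid correction with P⋆ followed by exact solution on the fine (S) variables is a direct method: (I − S(SᵀAS)⁻¹SᵀA)(I − P⋆(P⋆ᵀAP⋆)⁻¹P⋆ᵀA) = 0. -/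
open Matrix

private lemma posDef_transpose_mul_mul {m n : ℕ} {A : Matrix (Fin n) (Fin n) ℝ}
    (hA : A.PosDef) (B : Matrix (Fin n) (Fin m) ℝ)
    (hB : ∀ x, B *ᵥ x = 0 → x = 0) : (Bᵀ * A * B).PosDef := by
  have hBt : Bᴴ = Bᵀ := by ext i j; simp [Matrix.conjTranspose_apply]
  rw [← hBt]
  refine Matrix.PosDef.of_dotProduct_mulVec_pos (isHermitian_conjTranspose_mul_mul B hA.1) fun x hx => ?_
  have := hA.dotProduct_mulVec_pos (x := B *ᵥ x) (fun h => hx (hB x h))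
  simpa only [star_mulVec, dotProduct_mulVec, vecMul_vecMul] using this

/-- With GAMG orthogonality conditions and `P⋆` the ideal interpolation, the two-grid
method consisting of exact coarse-grid correction with `P⋆` followed by exact solution
on the fine (`S`) variables is a direct method:
`(I − S(SᵀAS)⁻¹SᵀA)(I − P⋆(P⋆ᵀAP⋆)⁻¹P⋆ᵀA) = 0`. -/
theorem ideal_interpolation_two_grid_direct_method {n ns nc : ℕ}
    (A : Matrix (Fin n) (Fin n) ℝ) (hA : A.PosDef)
    (S : Matrix (Fin n) (Fin ns) ℝ) (R : Matrix (Fin nc) (Fin n) ℝ)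
    (hRS : R * S = 0) (hS : Sᵀ * S = 1) (hR : R * Rᵀ = 1)
    (hdim : ns + nc = n)
    (P : Matrix (Fin n) (Fin nc) ℝ)
    (hP : P = (1 - S * (Sᵀ * A * S)⁻¹ * Sᵀ * A) * Rᵀ) :
    (1 - S * (Sᵀ * A * S)⁻¹ * Sᵀ * A) * (1 - P * (Pᵀ * A * P)⁻¹ * Pᵀ * A) = 0 := by
  have hAT : Aᵀ = A := by
    ext i j
    have := congrFun (congrFun hA.1 i) j
    simpa [Matrix.conjTranspose_apply] using this
  set B := (Sᵀ * A * S)⁻¹ with hBdef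
  set E := (1 - S * B * Sᵀ * A) with hEdef
  -- SᵀAS is PosDef, hence invertible
  have hSinj : ∀ x, S *ᵥ x = 0 → x = 0 := by
    intro x hx
    have : (Sᵀ * S) *ᵥ x = Sᵀ *ᵥ (S *ᵥ x) := by rw [← Matrix.mulVec_mulVec]
    rw [hS, hx] at this
    simpa using this
  have hSAS : (Sᵀ * A * S).PosDef := posDef_transpose_mul_mul hA S hSinj
  have hSASd : IsUnit (Sᵀ * A * S).det := isUnit_iff_ne_zero.mpr (ne_of_gt hSAS.det_pos)
  have hB1 : (Sᵀ * A * S) * B = 1 := Matrix.mul_nonsing_inv _ hSASd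
  -- SᵀAE = 0
  have hSAE : Sᵀ * A * E = 0 := by
    rw [hEdef, Matrix.mul_sub, Matrix.mul_one]
    have : Sᵀ * A * (S * B * Sᵀ * A) = Sᵀ * A := by
      calc Sᵀ * A * (S * B * Sᵀ * A) = ((Sᵀ * A * S) * B) * (Sᵀ * A) := by
            simp only [Matrix.mul_assoc]
        _ = Sᵀ * A := by rw [hB1, Matrix.one_mul]
    rw [this, sub_self]
  -- E is idempotent
  have hEE : E * E = E := by
    nth_rewrite 1 [hEdef]
    rw [Matrix.sub_mul, Matrix.one_mul]
    have : S * B * Sᵀ * A * E = S * B * (Sᵀ * A * E) := by simp only [Matrix.mul_assoc]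
    rw [this, hSAE, Matrix.mul_zero, sub_zero]
  -- Eᵀ A = A E
  have hBsym : Bᵀ = B := by
    rw [hBdef, Matrix.transpose_nonsing_inv]
    congr 1
    rw [Matrix.transpose_mul, Matrix.transpose_mul, Matrix.transpose_transpose, hAT]
    simp only [Matrix.mul_assoc]
  have hETA : Eᵀ * A = A * E := by
    rw [hEdef, Matrix.transpose_sub, Matrix.transpose_one]
    simp only [Matrix.transpose_mul, Matrix.transpose_transpose, hAT, hBsym]
    rw [Matrix.sub_mul, Matrix.one_mul, Matrix.mul_sub, Matrix.mul_one]
    simp only [Matrix.mul_assoc]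
  -- R * P = 1
  have hRSt : Sᵀ * Rᵀ = 0 := by
    have := congrArg Matrix.transpose hRS
    rwa [Matrix.transpose_mul, Matrix.transpose_zero] at this
  have hRP : R * P = 1 := by
    rw [hP, hEdef]
    simp only [Matrix.sub_mul, Matrix.mul_sub, Matrix.one_mul, ← Matrix.mul_assoc,
      hR, hRS, Matrix.zero_mul, sub_zero]
  -- P = E Rᵀ, E P = P
  have hPE : P = E * Rᵀ := by rw [hP, hEdef]
  have hEP : E * P = P := by rw [hPE, ← Matrix.mul_assoc, hEE]
  -- Pᵀ A = R A E
  have hPTA : Pᵀ * A = R * (A * E) := by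
    rw [hPE, Matrix.transpose_mul, Matrix.transpose_transpose, Matrix.mul_assoc, hETA]
  -- PᵀAP PosDef, invertible
  have hPinj : ∀ x, P *ᵥ x = 0 → x = 0 := by
    intro x hx
    have : (R * P) *ᵥ x = R *ᵥ (P *ᵥ x) := by rw [← Matrix.mulVec_mulVec]
    rw [hRP, hx] at this
    simpa using this
  have hPAP : (Pᵀ * A * P).PosDef := posDef_transpose_mul_mul hA P hPinj
  have hPAPd : IsUnit (Pᵀ * A * P).det := isUnit_iff_ne_zero.mpr (ne_of_gt hPAP.det_pos)
  set C := (Pᵀ * A * P)⁻¹ with hCdef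
  have hC1 : (Pᵀ * A * P) * C = 1 := Matrix.mul_nonsing_inv _ hPAPd
  -- orthogonality: S Sᵀ + Rᵀ R = 1
  have hOrth : S * Sᵀ + Rᵀ * R = 1 := by
    have e : Fin n ≃ Fin ns ⊕ Fin nc := (finCongr hdim.symm).trans finSumFinEquiv.symm
    have h1 : fromRows Sᵀ R * fromCols S Rᵀ = 1 := by
      rw [fromRows_mul_fromCols, hS, hR, hRS, hRSt, ← Matrix.fromBlocks_one]
    have h2 := (fromCols_mul_fromRows_eq_one_comm e S Rᵀ Sᵀ R).mpr h1
    rwa [fromCols_mul_fromRows] at h2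
  -- D := E - P C Pᵀ A satisfies A D = 0
  set D := E - P * C * (Pᵀ * A) with hDdef
  have hSAD : Sᵀ * (A * D) = 0 := by
    have hSAP : Sᵀ * A * P = 0 := by
      rw [hPE, ← Matrix.mul_assoc, hSAE, Matrix.zero_mul]
    have : Sᵀ * (A * D) = Sᵀ * A * E - (Sᵀ * A * P) * (C * (Pᵀ * A)) := by
      rw [hDdef, Matrix.mul_sub, Matrix.mul_sub]
      simp only [Matrix.mul_assoc]
    rw [this, hSAE, hSAP, Matrix.zero_mul, sub_zero]
  have hRAD : R * (A * D) = 0 := by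
    have hRAP : R * (A * P) = Pᵀ * A * P := by
      rw [hPTA, hPE]
      simp only [← Matrix.mul_assoc]
      rw [Matrix.mul_assoc (R * A) E E, hEE]
    have : R * (A * D) = R * (A * E) - (R * (A * P)) * (C * (Pᵀ * A)) := by
      rw [hDdef, Matrix.mul_sub, Matrix.mul_sub]
      simp only [Matrix.mul_assoc]
    rw [this, hRAP, ← Matrix.mul_assoc (Pᵀ * A * P) C, hC1, Matrix.one_mul, hPTA, sub_self]
  have hAD : A * D = 0 := by
    calc A * D = (S * Sᵀ + Rᵀ * R) * (A * D) := by rw [hOrth, Matrix.one_mul]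
      _ = S * (Sᵀ * (A * D)) + Rᵀ * (R * (A * D)) := by
          rw [Matrix.add_mul]; simp only [Matrix.mul_assoc]
      _ = 0 := by rw [hSAD, hRAD, Matrix.mul_zero, Matrix.mul_zero, add_zero]
  have hAd : IsUnit A.det := isUnit_iff_ne_zero.mpr (ne_of_gt hA.det_pos)
  have hD : D = 0 := by
    have := congrArg (fun M => A⁻¹ * M) hAD
    simpa [← Matrix.mul_assoc, Matrix.nonsing_inv_mul A hAd] using this
  -- conclude
  have : E * (1 - P * C * (Pᵀ * A)) = D := by
    rw [Matrix.mul_sub, Matrix.mul_one, hDdef]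
    rw [show E * (P * C * (Pᵀ * A)) = (E * P) * (C * (Pᵀ * A)) by
      simp only [Matrix.mul_assoc], hEP]
    simp only [Matrix.mul_assoc]
  rw [show (1 : Matrix (Fin n) (Fin n) ℝ) - P * (Pᵀ * A * P)⁻¹ * Pᵀ * A
      = 1 - P * C * (Pᵀ * A) by rw [hCdef]; simp only [Matrix.mul_assoc]]
  rw [this, hD]
end

section
/- Let A ∈ ℝ^{n×n} be symmetric, let S ∈ ℝ^{n×n_s} be such that SᵀAS is invertible, and let R ∈ ℝ^{n_c×n}. With P⋆ = (I − S(SᵀAS)⁻¹SᵀA)Rᵀ, the Galerkin coarse operator equals the Schur complement of SᵀAS in the transformed system: P⋆ᵀAP⋆ = RARᵀ − (RAS)(SᵀAS)⁻¹(SᵀARᵀ). Moreover, if A is positive definite, S has full column rank, RS = 0 and RRᵀ = I_c, then P⋆ᵀAP⋆ is symmetric positive definite. -/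
open Matrix

/-- For symmetric `A` with `SᵀAS` invertible, the Galerkin coarse operator built from the
ideal interpolation equals the Schur complement of `SᵀAS` in the transformed system:
`P⋆ᵀAP⋆ = RARᵀ − (RAS)(SᵀAS)⁻¹(SᵀARᵀ)`.  Moreover, if `A` is positive definite,
`S` has full column rank, `RS = 0` and `RRᵀ = I`, then `P⋆ᵀAP⋆` is symmetric positive
definite. -/
theorem ideal_interpolation_galerkin_schur_complement {n ns nc : ℕ}
    (A : Matrix (Fin n) (Fin n) ℝ) (hA : A.IsSymm)
    (S : Matrix (Fin n) (Fin ns) ℝ) (hSAS : IsUnit (Sᵀ * A * S))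
    (R : Matrix (Fin nc) (Fin n) ℝ)
    (P : Matrix (Fin n) (Fin nc) ℝ)
    (hP : P = (1 - S * (Sᵀ * A * S)⁻¹ * Sᵀ * A) * Rᵀ) :
    Pᵀ * A * P = R * A * Rᵀ - (R * A * S) * (Sᵀ * A * S)⁻¹ * (Sᵀ * A * Rᵀ) ∧
    (A.PosDef → Function.Injective S.mulVec → R * S = 0 → R * Rᵀ = 1 →
      (Pᵀ * A * P).PosDef) := by
  refine ⟨?_, ?_⟩
  · set B := (Sᵀ * A * S)⁻¹ with hB
    have key : B * (Sᵀ * A * S) = 1 := nonsing_inv_mul _ ((isUnit_iff_isUnit_det _).mp hSAS)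
    have hBt : Bᵀ = B := by
      rw [hB, transpose_nonsing_inv]
      congr 1
      rw [transpose_mul, transpose_mul, transpose_transpose, hA.eq, Matrix.mul_assoc]
    have hPt : Pᵀ = R * (1 - A * S * B * Sᵀ) := by
      rw [hP, transpose_mul, transpose_sub, transpose_one, transpose_mul, transpose_mul,
        transpose_mul, transpose_transpose, hBt, hA.eq, transpose_transpose]
      rw [Matrix.mul_assoc, Matrix.mul_assoc]
    have mid : (1 - A * S * B * Sᵀ) * A * (1 - S * B * Sᵀ * A) = A - A * S * B * (Sᵀ * A) := by
      have h1 : A * S * B * Sᵀ * A * (S * B * Sᵀ * A) = A * S * B * Sᵀ * A := by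
        calc A * S * B * Sᵀ * A * (S * B * Sᵀ * A)
            = A * S * (B * (Sᵀ * A * S)) * (B * Sᵀ * A) := by
              simp only [Matrix.mul_assoc]
          _ = A * S * B * Sᵀ * A := by rw [key]; simp [Matrix.mul_assoc]
      simp only [Matrix.mul_sub, Matrix.sub_mul, Matrix.one_mul, Matrix.mul_one]
      rw [h1]
      abel_nf
      simp only [Matrix.mul_assoc]
    calc Pᵀ * A * P
        = R * ((1 - A * S * B * Sᵀ) * A * (1 - S * B * Sᵀ * A)) * Rᵀ := by
          rw [hPt, hP]; simp only [Matrix.mul_assoc]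
      _ = R * (A - A * S * B * (Sᵀ * A)) * Rᵀ := by rw [mid]
      _ = R * A * Rᵀ - (R * A * S) * B * (Sᵀ * A * Rᵀ) := by
          rw [Matrix.mul_sub, Matrix.sub_mul]; simp only [Matrix.mul_assoc]
  · intro hApd _hSinj hRS hRRt
    have hRP : R * P = 1 := by
      rw [hP]
      simp only [Matrix.mul_sub, Matrix.sub_mul, Matrix.mul_one, Matrix.one_mul,
        ← Matrix.mul_assoc, hRS, hRRt]
      simp
    have hPinj : Function.Injective P.mulVec := by
      intro x y hxy
      have h := congrArg (R.mulVec) hxy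
      rwa [mulVec_mulVec, mulVec_mulVec, hRP, one_mulVec, one_mulVec] at h
    refine PosDef.of_dotProduct_mulVec_pos ?_ ?_
    · have h := Matrix.isHermitian_conjTranspose_mul_mul P hApd.isHermitian
      simpa using h
    · intro x hx
      have hPx : P *ᵥ x ≠ 0 := by
        intro h
        exact hx (hPinj (by rw [h, mulVec_zero]))
      have := hApd.dotProduct_mulVec_pos hPx
      simpa [← mulVec_mulVec, dotProduct_mulVec, vecMul_transpose] using this
end

section
/- Let A ∈ ℝ^{n×n} be symmetric positive definite and M ∈ ℝ^{n×n} invertible with M + Mᵀ − A symmetric positive definite. Then the symmetrized smoother M̃ = M(M + Mᵀ − A)⁻¹Mᵀ is symmetric positive definite and dominates A in the Loewner order: xᵀM̃x ≥ xᵀAx for all x ∈ ℝⁿ (i.e., M̃ − A is positive semidefinite). -/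
open Matrix

private lemma dot_symm {n : ℕ} (N : Matrix (Fin n) (Fin n) ℝ) (hN : Nᵀ = N)
    (u v : Fin n → ℝ) : u ⬝ᵥ (N *ᵥ v) = (N *ᵥ u) ⬝ᵥ v := by
  rw [dotProduct_mulVec, ← vecMul_transpose, hN, dotProduct_comm]

/-- For SPD `A` and invertible `M` with `M + Mᵀ − A` symmetric positive definite, the
symmetrized smoother `M̃ = M(M + Mᵀ − A)⁻¹Mᵀ` is symmetric positive definite and
dominates `A` in the Loewner order: `xᵀM̃x ≥ xᵀAx` for all `x`. -/
theorem symmetrized_smoother_posdef_dominates {n : ℕ}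
    (A M : Matrix (Fin n) (Fin n) ℝ) (hA : A.PosDef) (hM : IsUnit M)
    (hsm : (M + Mᵀ - A).PosDef)
    (Mt : Matrix (Fin n) (Fin n) ℝ)
    (hMt : Mt = M * (M + Mᵀ - A)⁻¹ * Mᵀ) :
    Mt.PosDef ∧ ∀ x : Fin n → ℝ, x ⬝ᵥ (A *ᵥ x) ≤ x ⬝ᵥ (Mt *ᵥ x) := by
  set N := M + Mᵀ - A with hNdef
  have hNsymm : Nᵀ = N := by
    have := hsm.1
    simpa [Matrix.IsHermitian, conjTranspose_eq_transpose_of_trivial] using this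
  have hNinv : (N⁻¹)ᵀ = N⁻¹ := by
    have := hsm.inv.1
    simpa [Matrix.IsHermitian, conjTranspose_eq_transpose_of_trivial] using this
  have hNunit : IsUnit N := hsm.isUnit
  -- key inequality
  have key : ∀ x : Fin n → ℝ, x ⬝ᵥ (A *ᵥ x) ≤ x ⬝ᵥ (Mt *ᵥ x) := by
    intro x
    set y : Fin n → ℝ := N⁻¹ *ᵥ (Mᵀ *ᵥ x) with hy
    have hNy : N *ᵥ y = Mᵀ *ᵥ x := by
      rw [hy, mulVec_mulVec, mul_nonsing_inv _ (isUnit_iff_isUnit_det _ |>.mp hNunit),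
        one_mulVec]
    have hMty : Mt *ᵥ x = M *ᵥ y := by
      rw [hMt, hy, ← mulVec_mulVec, ← mulVec_mulVec]
    have e1 : x ⬝ᵥ (Mt *ᵥ x) = y ⬝ᵥ (N *ᵥ y) := by
      rw [hMty, dot_symm N hNsymm y y, hNy, dotProduct_mulVec, ← vecMul_transpose,
        transpose_transpose, dotProduct_comm]
    have e2 : (x - y) ⬝ᵥ (N *ᵥ (x - y)) = y ⬝ᵥ (N *ᵥ y) - x ⬝ᵥ (A *ᵥ x) := by
      have h1 : x ⬝ᵥ (N *ᵥ y) = x ⬝ᵥ (Mᵀ *ᵥ x) := by rw [hNy]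
      have h2 : y ⬝ᵥ (N *ᵥ x) = x ⬝ᵥ (M *ᵥ x) := by
        rw [dot_symm N hNsymm y x, hNy, dotProduct_mulVec, ← vecMul_transpose,
          transpose_transpose]
      have h3 : x ⬝ᵥ (N *ᵥ x) = x ⬝ᵥ (M *ᵥ x) + x ⬝ᵥ (Mᵀ *ᵥ x) - x ⬝ᵥ (A *ᵥ x) := by
        simp [hNdef, add_mulVec, sub_mulVec, dotProduct_add, dotProduct_sub]
      rw [mulVec_sub, sub_dotProduct, dotProduct_sub, dotProduct_sub, h1, h2, h3]
      ring
    have := hsm.posSemidef.dotProduct_mulVec_nonneg (x - y)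
    simp only [star_trivial] at this
    rw [e2] at this
    rw [e1]
    linarith [this]
  refine ⟨PosDef.of_dotProduct_mulVec_pos ?_ (fun x hx => by
    have := hA.dotProduct_mulVec_pos hx; simp only [star_trivial] at this
    exact lt_of_lt_of_le this (key x)), key⟩
  -- Hermitian
  have : Mtᵀ = Mt := by
    rw [hMt]
    simp [transpose_mul, hNinv, mul_assoc]
  simpa [Matrix.IsHermitian, conjTranspose_eq_transpose_of_trivial] using this
end

section
/- Let A ∈ ℝ^{n×n} be symmetric positive definite, let S ∈ ℝ^{n×n_s} (with n_s ≥ 1) and R ∈ ℝ^{n_c×n} satisfy RS = 0, SᵀS = I_s, RRᵀ = I_c and n_s + n_c = n, and set P⋆ = (I − S(SᵀAS)⁻¹SᵀA)Rᵀ. Then P⋆ minimizes the A-operator norm of the complementary projection among all interpolations compatible with R: ‖I − P⋆R‖_A = 1, and for every P ∈ ℝ^{n×n_c} with RP = I_c one has ‖I − PR‖_A ≥ 1 = ‖I − P⋆R‖_A, where ‖E‖_A = sup_{e≠0} ‖Ee‖_A/‖e‖_A. -/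
open Matrix

private lemma quadForm_mulVec {m n : ℕ} (M : Matrix (Fin m) (Fin n) ℝ)
    (A : Matrix (Fin m) (Fin m) ℝ) (e : Fin n → ℝ) :
    (M *ᵥ e) ⬝ᵥ (A *ᵥ (M *ᵥ e)) = e ⬝ᵥ ((Mᵀ * A * M) *ᵥ e) := by
  rw [mulVec_mulVec, dotProduct_mulVec, dotProduct_mulVec, ← vecMul_transpose,
    vecMul_vecMul, Matrix.mul_assoc]

private lemma mulVec_sq_le {n : ℕ} (M : Matrix (Fin n) (Fin n) ℝ) (x : Fin n → ℝ) :
    (M *ᵥ x) ⬝ᵥ (M *ᵥ x) ≤ (∑ i, ∑ j, (M i j)^2) * (x ⬝ᵥ x) := by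
  calc (M *ᵥ x) ⬝ᵥ (M *ᵥ x) = ∑ i, ((M *ᵥ x) i)^2 := by simp [dotProduct, pow_two]
    _ ≤ ∑ i : Fin n, (∑ j, (M i j)^2) * (x ⬝ᵥ x) := Finset.sum_le_sum fun i _ => by
        have h := Finset.sum_mul_sq_le_sq_mul_sq Finset.univ (fun j => M i j) x
        calc ((M *ᵥ x) i)^2 = (∑ j, M i j * x j)^2 := by simp [mulVec, dotProduct]
          _ ≤ (∑ j, (M i j)^2) * ∑ j, (x j)^2 := h
          _ = (∑ j, (M i j)^2) * (x ⬝ᵥ x) := by simp [dotProduct, pow_two]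
    _ = (∑ i, ∑ j, (M i j)^2) * (x ⬝ᵥ x) := by rw [Finset.sum_mul]

private lemma one_mem_set {n ns : ℕ} (A : Matrix (Fin n) (Fin n) ℝ) (hA : A.PosDef)
    (S : Matrix (Fin n) (Fin ns) ℝ) (hS : Sᵀ * S = 1) (hns : 1 ≤ ns)
    (E : Matrix (Fin n) (Fin n) ℝ) (hES : E * S = S) :
    (1:ℝ) ∈ {r : ℝ | ∃ e : Fin n → ℝ, e ≠ 0 ∧
      r = Real.sqrt ((E *ᵥ e) ⬝ᵥ (A *ᵥ (E *ᵥ e))) / Real.sqrt (e ⬝ᵥ (A *ᵥ e))} := by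
  have i0 : Fin ns := ⟨0, hns⟩
  set v : Fin ns → ℝ := fun _ => 1 with hv
  have hvne : v ≠ 0 := by
    intro h
    have := congrFun h i0
    simp [hv] at this
  have hne : S *ᵥ v ≠ 0 := by
    intro h
    have h2 : Sᵀ *ᵥ (S *ᵥ v) = 0 := by rw [h, mulVec_zero]
    rw [mulVec_mulVec, hS, one_mulVec] at h2
    exact hvne h2
  refine ⟨S *ᵥ v, hne, ?_⟩
  have hEe : E *ᵥ (S *ᵥ v) = S *ᵥ v := by rw [mulVec_mulVec, hES]
  have hpos : 0 < (S *ᵥ v) ⬝ᵥ (A *ᵥ (S *ᵥ v)) := by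
    have := hA.re_dotProduct_pos hne
    simpa using this
  rw [hEe, div_self (by positivity : Real.sqrt ((S *ᵥ v) ⬝ᵥ (A *ᵥ (S *ᵥ v))) ≠ 0)]

open scoped MatrixOrder in
private lemma bddAbove_set {n : ℕ} (A : Matrix (Fin n) (Fin n) ℝ) (hA : A.PosDef)
    (E : Matrix (Fin n) (Fin n) ℝ) :
    BddAbove {r : ℝ | ∃ e : Fin n → ℝ, e ≠ 0 ∧
      r = Real.sqrt ((E *ᵥ e) ⬝ᵥ (A *ᵥ (E *ᵥ e))) / Real.sqrt (e ⬝ᵥ (A *ᵥ e))} := by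
  classical
  set B := CFC.sqrt A with hBdef
  have hB2 : B * B = A := CFC.sqrt_mul_sqrt_self A hA.posSemidef.nonneg
  have hBsym : Bᵀ = B := by
    have := (CFC.sqrt_nonneg A).posSemidef.isHermitian
    simpa [Matrix.IsHermitian, conjTranspose_eq_transpose_of_trivial] using this
  have hBdet : IsUnit B.det := by
    have hd : B.det * B.det = A.det := by rw [← det_mul, hB2]
    have hAd : A.det ≠ 0 := ne_of_gt hA.det_pos
    have hBne : B.det ≠ 0 := by
      intro h; rw [h, mul_zero] at hd; exact hAd hd.symm
    exact hBne.isUnit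
  have hBinv : B⁻¹ * B = 1 := nonsing_inv_mul _ hBdet
  set M := B * E * B⁻¹ with hM
  set C := ∑ i, ∑ j, (M i j)^2 with hC
  have hC0 : 0 ≤ C := Finset.sum_nonneg fun i _ => Finset.sum_nonneg fun j _ => sq_nonneg _
  refine ⟨Real.sqrt C, fun r hr => ?_⟩
  obtain ⟨e, he, rfl⟩ := hr
  have hq : e ⬝ᵥ (A *ᵥ e) = (B *ᵥ e) ⬝ᵥ (B *ᵥ e) := by
    have := quadForm_mulVec B 1 e
    simpa [hBsym, hB2, Matrix.mul_one] using this.symm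
  have hqE : (E *ᵥ e) ⬝ᵥ (A *ᵥ (E *ᵥ e)) = (M *ᵥ (B *ᵥ e)) ⬝ᵥ (M *ᵥ (B *ᵥ e)) := by
    have hMB : M * B = B * E := by
      rw [hM, Matrix.mul_assoc, hBinv, Matrix.mul_one]
    have h1 : B *ᵥ (E *ᵥ e) = M *ᵥ (B *ᵥ e) := by
      rw [mulVec_mulVec, mulVec_mulVec, hMB]
    have h2 := quadForm_mulVec B 1 (E *ᵥ e)
    simp only [Matrix.mul_one, one_mulVec, hBsym, hB2] at h2
    rw [← h2, h1]
  have hqpos : 0 < e ⬝ᵥ (A *ᵥ e) := by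
    have := hA.re_dotProduct_pos he
    simpa using this
  have hbound : (E *ᵥ e) ⬝ᵥ (A *ᵥ (E *ᵥ e)) ≤ C * (e ⬝ᵥ (A *ᵥ e)) := by
    rw [hqE, hq]
    exact mulVec_sq_le M (B *ᵥ e)
  have hs1 : Real.sqrt ((E *ᵥ e) ⬝ᵥ (A *ᵥ (E *ᵥ e)))
      ≤ Real.sqrt C * Real.sqrt (e ⬝ᵥ (A *ᵥ e)) := by
    rw [← Real.sqrt_mul hC0]
    exact Real.sqrt_le_sqrt hbound
  rw [div_le_iff₀ (Real.sqrt_pos.mpr hqpos)]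
  exact hs1

/-- The ideal interpolation minimizes the `A`-operator norm of the complementary
projection among all interpolations compatible with `R`: `‖I − P⋆R‖_A = 1`, and for
every `P` with `RP = I`, `‖I − PR‖_A ≥ 1 = ‖I − P⋆R‖_A`. -/
theorem ideal_interpolation_minimizes_complementary_projection_norm {n ns nc : ℕ}
    (A : Matrix (Fin n) (Fin n) ℝ) (hA : A.PosDef)
    (S : Matrix (Fin n) (Fin ns) ℝ) (R : Matrix (Fin nc) (Fin n) ℝ)
    (hRS : R * S = 0) (hS : Sᵀ * S = 1) (hR : R * Rᵀ = 1)
    (hdim : ns + nc = n) (hns : 1 ≤ ns)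
    (Pstar : Matrix (Fin n) (Fin nc) ℝ)
    (hPstar : Pstar = (1 - S * (Sᵀ * A * S)⁻¹ * Sᵀ * A) * Rᵀ)
    (opNormA : Matrix (Fin n) (Fin n) ℝ → ℝ)
    (hopNormA : ∀ E : Matrix (Fin n) (Fin n) ℝ,
      opNormA E = sSup {r : ℝ | ∃ e : Fin n → ℝ, e ≠ 0 ∧
        r = Real.sqrt ((E *ᵥ e) ⬝ᵥ (A *ᵥ (E *ᵥ e))) / Real.sqrt (e ⬝ᵥ (A *ᵥ e))}) :
    opNormA (1 - Pstar * R) = 1 ∧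
    ∀ P : Matrix (Fin n) (Fin nc) ℝ, R * P = 1 →
      opNormA (1 - Pstar * R) ≤ opNormA (1 - P * R) := by
  have hAsym : Aᵀ = A := by
    have := hA.isHermitian
    simpa [Matrix.IsHermitian, conjTranspose_eq_transpose_of_trivial] using this
  -- orthogonal complement identity: S*Sᵀ + Rᵀ*R = 1
  have hsum : S * Sᵀ + Rᵀ * R = 1 := by
    have e : Fin n ≃ Fin ns ⊕ Fin nc := (finCongr hdim.symm).trans finSumFinEquiv.symm
    have h1 : fromRows Sᵀ R * fromCols S Rᵀ = 1 := by
      rw [fromRows_mul_fromCols]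
      have hSR : Sᵀ * Rᵀ = 0 := by
        have := congrArg transpose hRS
        simpa [transpose_mul] using this
      rw [hS, hR, hRS, hSR, ← fromBlocks_one]
    have h2 : fromCols S Rᵀ * fromRows Sᵀ R = 1 :=
      (fromCols_mul_fromRows_eq_one_comm e S Rᵀ Sᵀ R).mpr h1
    rwa [fromCols_mul_fromRows] at h2
  -- SᵀAS is positive definite
  have hSAS : (Sᵀ * A * S).PosDef := by
    rw [posDef_iff_dotProduct_mulVec]
    constructor
    · show (Sᵀ * A * S)ᴴ = _
      rw [conjTranspose_eq_transpose_of_trivial]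
      simp [transpose_mul, hAsym, Matrix.mul_assoc]
    · intro x hx
      have hSx : S *ᵥ x ≠ 0 := by
        intro h
        have h2 : Sᵀ *ᵥ (S *ᵥ x) = 0 := by rw [h, mulVec_zero]
        rw [mulVec_mulVec, hS, one_mulVec] at h2
        exact hx h2
      have hpos := hA.dotProduct_mulVec_pos hSx
      simp only [star_trivial] at hpos ⊢
      calc (0:ℝ) < (S *ᵥ x) ⬝ᵥ (A *ᵥ (S *ᵥ x)) := by simpa using hpos
        _ = x ⬝ᵥ ((Sᵀ * A * S) *ᵥ x) := quadForm_mulVec S A x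
  set Q := (Sᵀ * A * S)⁻¹ with hQdef
  have hdet : IsUnit (Sᵀ * A * S).det := hSAS.det_pos.ne'.isUnit
  have hQ1 : Q * (Sᵀ * A * S) = 1 := nonsing_inv_mul _ hdet
  have hSASsym : (Sᵀ * A * S)ᵀ = Sᵀ * A * S := by
    simp [transpose_mul, hAsym, Matrix.mul_assoc]
  have hQsym : Qᵀ = Q := by
    rw [hQdef, transpose_nonsing_inv, hSASsym]
  set G := S * Q * Sᵀ with hGdef
  have hGsym : Gᵀ = G := by
    rw [hGdef]
    simp [transpose_mul, hQsym, Matrix.mul_assoc]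
  have k1 : S * Q * (Sᵀ * A * S) = S := by
    rw [Matrix.mul_assoc S Q, hQ1, Matrix.mul_one]
  have hGAG : G * A * G = G := by
    have h : G * A * G = (S * Q * (Sᵀ * A * S)) * (Q * Sᵀ) := by
      rw [hGdef]; simp only [Matrix.mul_assoc]
    rw [h, k1, ← Matrix.mul_assoc]
  -- the complementary projection of the ideal interpolation is the A-orthogonal
  -- projection G*A onto range S
  have hE : 1 - Pstar * R = G * A := by
    have hRtR : Rᵀ * R = 1 - S * Sᵀ := by
      rw [eq_sub_iff_add_eq, add_comm]; exact hsum
    calc 1 - Pstar * R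
        = 1 - (1 - G * A) * (Rᵀ * R) := by
          rw [hPstar, Matrix.mul_assoc]
      _ = 1 - (1 - G * A) * (1 - S * Sᵀ) := by rw [hRtR]
      _ = S * Sᵀ + G * A - G * (A * (S * Sᵀ)) := by noncomm_ring
      _ = S * Sᵀ + G * A - S * Sᵀ := by
          have h2 : G * (A * (S * Sᵀ)) = S * Q * (Sᵀ * A * S) * Sᵀ := by
            rw [hGdef]; simp only [Matrix.mul_assoc]
          rw [h2, k1]
      _ = G * A := by abel
  -- A-nonexpansiveness of G*A
  have hGA_t : (G * A)ᵀ = A * G := by rw [transpose_mul, hGsym, hAsym]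
  have hEAE : (G * A)ᵀ * A * (G * A) = A * G * A := by
    rw [hGA_t]
    calc A * G * A * (G * A) = A * (G * A * G) * A := by noncomm_ring
      _ = A * G * A := by rw [hGAG]
  have hCompl : (1 - G * A)ᵀ * A * (1 - G * A) = A - A * G * A := by
    rw [transpose_sub, transpose_one, hGA_t]
    calc (1 - A * G) * A * (1 - G * A)
        = A - A * G * A - A * G * A + A * (G * A * G) * A := by noncomm_ring
      _ = A - A * G * A := by rw [hGAG]; abel
  have hcontr : ∀ e : Fin n → ℝ,
      ((G * A) *ᵥ e) ⬝ᵥ (A *ᵥ ((G * A) *ᵥ e)) ≤ e ⬝ᵥ (A *ᵥ e) := by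
    intro e
    have h1 := quadForm_mulVec (G * A) A e
    have h2 := quadForm_mulVec (1 - G * A) A e
    have h3 : (0:ℝ) ≤ ((1 - G * A) *ᵥ e) ⬝ᵥ (A *ᵥ ((1 - G * A) *ᵥ e)) := by
      have := hA.posSemidef.re_dotProduct_nonneg ((1 - G * A) *ᵥ e)
      simpa using this
    rw [h2, hCompl] at h3
    rw [h1, hEAE]
    have h4 : e ⬝ᵥ ((A - A * G * A) *ᵥ e)
        = e ⬝ᵥ (A *ᵥ e) - e ⬝ᵥ ((A * G * A) *ᵥ e) := by
      rw [sub_mulVec, dotProduct_sub]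
    rw [h4] at h3
    linarith
  -- the Rayleigh set of the ideal complementary projection
  have hfix : ∀ P : Matrix (Fin n) (Fin nc) ℝ, (1 - P * R) * S = S := by
    intro P
    rw [Matrix.sub_mul, Matrix.one_mul, Matrix.mul_assoc, hRS, Matrix.mul_zero, sub_zero]
  have hfixStar : (1 - Pstar * R) * S = S := hfix Pstar
  have hmemStar : (1:ℝ) ∈ {r : ℝ | ∃ e : Fin n → ℝ, e ≠ 0 ∧
      r = Real.sqrt (((1 - Pstar * R) *ᵥ e) ⬝ᵥ (A *ᵥ ((1 - Pstar * R) *ᵥ e))) /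
        Real.sqrt (e ⬝ᵥ (A *ᵥ e))} :=
    one_mem_set A hA S hS hns _ hfixStar
  have hub : ∀ r ∈ {r : ℝ | ∃ e : Fin n → ℝ, e ≠ 0 ∧
      r = Real.sqrt (((1 - Pstar * R) *ᵥ e) ⬝ᵥ (A *ᵥ ((1 - Pstar * R) *ᵥ e))) /
        Real.sqrt (e ⬝ᵥ (A *ᵥ e))}, r ≤ 1 := by
    rintro r ⟨e, he, rfl⟩
    have hqpos : 0 < e ⬝ᵥ (A *ᵥ e) := by
      have := hA.re_dotProduct_pos he
      simpa using this
    rw [hE]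
    rw [div_le_one (Real.sqrt_pos.mpr hqpos)]
    exact Real.sqrt_le_sqrt (hcontr e)
  have hfirst : opNormA (1 - Pstar * R) = 1 := by
    rw [hopNormA]
    refine le_antisymm (csSup_le ⟨1, hmemStar⟩ hub) (le_csSup ⟨1, fun r hr => hub r hr⟩ hmemStar)
  refine ⟨hfirst, fun P hRP => ?_⟩
  rw [hfirst, hopNormA]
  exact le_csSup (bddAbove_set A hA _) (one_mem_set A hA S hS hns _ (hfix P))
end
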